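/- Let ξ ∈ ℂⁿ (n ≥ 2) have pairwise distinct coordinates, let x ∈ ℂⁿ, 1 ≤ p ≤ ∞ with conjugate exponent q, a = (n-1)^{1/q}, b = 2^{1/q}, and suppose E := ‖(x - ξ)/d(ξ)‖_p < R = 2/(b + 1 + √((b-1)² + 8a)). If in addition y ∈ ℂⁿ satisfies |yⱼ - ξⱼ| ≤ |xⱼ - ξⱼ| for all j, and i is an index with xᵢ ≠ ξⱼ and xᵢ ≠ yⱼ for all j ≠ i, then the quantity σᵢ = (xᵢ - ξᵢ) ∑_{j ≠ i} (yⱼ - ξⱼ)/((xᵢ - ξⱼ)(xᵢ - yⱼ)) satisfies |σᵢ| ≤ aE²/((1 - E)(1 - bE)) < 1. -/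

import Mathlib

open scoped ENNReal

noncomputable def pnorm (p : ℝ≥0∞) {n : ℕ} (w : Fin n → ℝ) : ℝ :=
  ‖(WithLp.equiv p (Fin n → ℝ)).symm w‖

lemma holder_sum {n : ℕ} (p q : ℝ≥0∞) (hp : 1 ≤ p) (hpq : 1/p + 1/q = 1)
    (w : Fin n → ℝ) (hw : ∀ k, 0 ≤ w k) (S : Finset (Fin n)) :
    ∑ j ∈ S, w j ≤ (S.card : ℝ) ^ (1/q).toReal * pnorm p w := by
  haveI : Fact (1 ≤ p) := ⟨hp⟩
  have hpn : 0 ≤ pnorm p w := norm_nonneg ((WithLp.equiv p (Fin n → ℝ)).symm w)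
  rcases eq_or_ne p ⊤ with hptop | hptop
  · -- p = ∞
    subst hptop
    have hq1 : 1/q = 1 := by simpa using hpq
    rw [hq1]
    simp only [ENNReal.toReal_one, Real.rpow_one]
    have hble : ∀ j, w j ≤ pnorm ⊤ w := by
      intro j
      have : ‖((WithLp.equiv ⊤ (Fin n → ℝ)).symm w) j‖ ≤ pnorm ⊤ w := by
        rw [pnorm, PiLp.norm_eq_ciSup]
        exact le_ciSup (f := fun i => ‖((WithLp.equiv ⊤ (Fin n → ℝ)).symm w) i‖)
          (Set.Finite.bddAbove (Set.finite_range _)) j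
      simpa [Real.norm_eq_abs, abs_of_nonneg (hw j)] using this
    calc ∑ j ∈ S, w j ≤ ∑ j ∈ S, pnorm ⊤ w := Finset.sum_le_sum fun j _ => hble j
      _ = (S.card : ℝ) * pnorm ⊤ w := by rw [Finset.sum_const, nsmul_eq_mul]
  · -- p < ∞
    have hpr : 1 ≤ p.toReal := by
      rw [← ENNReal.toReal_one]
      exact ENNReal.toReal_mono hptop hp
    have hprpos : 0 < p.toReal := lt_of_lt_of_le one_pos hpr
    have hnorm : pnorm p w = (∑ k, |w k| ^ p.toReal) ^ (1 / p.toReal) := by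
      rw [pnorm, PiLp.norm_eq_sum hprpos]
      simp [Real.norm_eq_abs]
    rcases eq_or_ne p 1 with hp1 | hp1
    · have hq0 : 1/q = 0 := by
        rw [hp1] at hpq
        have h' : (1 : ℝ≥0∞) + 1/q = 1 + 0 := by simpa using hpq
        exact (ENNReal.add_right_inj (by simp)).mp h'
      have hpt1 : p.toReal = 1 := by rw [hp1]; simp
      rw [hq0]
      simp only [ENNReal.toReal_zero, Real.rpow_zero, one_mul]
      rw [hnorm, hpt1]
      norm_num
      calc ∑ j ∈ S, w j ≤ ∑ j ∈ S, |w j| := Finset.sum_le_sum fun j _ => le_abs_self _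
        _ ≤ ∑ k, |w k| := Finset.sum_le_sum_of_subset_of_nonneg (Finset.subset_univ S)
            (fun k _ _ => abs_nonneg _)
    · -- 1 < p < ∞
      have hp1' : 1 < p.toReal := by
        rcases lt_or_eq_of_le hpr with h | h
        · exact h
        · exfalso; apply hp1
          rw [← ENNReal.ofReal_toReal hptop, ← h]; simp
      -- q is finite, nonzero
      have hq_ne_top : q ≠ ⊤ := by
        intro h
        rw [h] at hpq
        simp only [ENNReal.div_top, add_zero] at hpq
        -- 1/p = 1 → p = 1
        apply hp1
        rwa [one_div, ENNReal.inv_eq_one] at hpq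
      have hq_ne_zero : q ≠ 0 := by
        intro h
        rw [h] at hpq
        simp at hpq
      have hp_ne_zero : p ≠ 0 := by positivity
      have htr : p.toReal⁻¹ + q.toReal⁻¹ = 1 := by
        have : ((1/p : ℝ≥0∞) + 1/q).toReal = 1 := by rw [hpq]; simp
        rw [ENNReal.toReal_add (by simp [hp_ne_zero]) (by simp [hq_ne_zero])] at this
        rw [one_div, one_div, ENNReal.toReal_inv, ENNReal.toReal_inv] at this
        exact this
      have hconj : Real.HolderConjugate p.toReal q.toReal := Real.holderConjugate_iff.mpr ⟨hp1', htr⟩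
      have hqtr : (1/q).toReal = 1/q.toReal := by
        rw [one_div, one_div, ENNReal.toReal_inv]
      have key := Real.inner_le_Lp_mul_Lq S w (fun _ => 1) hconj
      simp only [mul_one, abs_one, Real.one_rpow, Finset.sum_const, nsmul_eq_mul] at key
      have h2 : (∑ j ∈ S, |w j| ^ p.toReal) ^ (1/p.toReal) ≤ pnorm p w := by
        rw [hnorm]
        apply Real.rpow_le_rpow (by positivity)
        · exact Finset.sum_le_sum_of_subset_of_nonneg (Finset.subset_univ S)
            (fun k _ _ => by positivity)
        · positivity
      calc ∑ j ∈ S, w j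
          ≤ (∑ j ∈ S, |w j| ^ p.toReal) ^ (1/p.toReal) * (S.card : ℝ) ^ (1/q.toReal) := key
        _ ≤ pnorm p w * (S.card : ℝ) ^ (1/q.toReal) := by
            apply mul_le_mul_of_nonneg_right h2 (by positivity)
        _ = (S.card : ℝ) ^ (1/q).toReal * pnorm p w := by rw [hqtr, mul_comm]

noncomputable def dmin {n : ℕ} (v : Fin n → ℂ) (i : Fin n) : ℝ :=
  ⨅ j : {j : Fin n // j ≠ i}, ‖v i - v j.1‖

lemma dmin_le {n : ℕ} (v : Fin n → ℂ) {i j : Fin n} (h : j ≠ i) :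
    dmin v i ≤ ‖v i - v j‖ := by
  exact ciInf_le (Set.Finite.bddBelow
    (Set.finite_range (fun j : {j : Fin n // j ≠ i} => ‖v i - v j.1‖))) ⟨j, h⟩

lemma dmin_pos {n : ℕ} (hn : 2 ≤ n) (v : Fin n → ℂ) (hv : Function.Injective v) (i : Fin n) :
    0 < dmin v i := by
  have hne : Nonempty {j : Fin n // j ≠ i} := by
    obtain ⟨j, hj⟩ := Fintype.exists_ne_of_one_lt_card (by simp; omega) i
    exact ⟨⟨j, hj⟩⟩
  obtain ⟨j0, hj0⟩ := Finite.exists_min (fun j : {j : Fin n // j ≠ i} => ‖v i - v j.1‖)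
  have h1 : ‖v i - v j0.1‖ ≤ dmin v i := le_ciInf hj0
  have h2 : 0 < ‖v i - v j0.1‖ := by
    rw [norm_pos_iff]
    intro h
    exact j0.2 (hv (sub_eq_zero.mp h).symm)
  linarith

lemma numeric_bounds (a b E : ℝ) (ha1 : 1 ≤ a) (hb1 : 1 ≤ b) (hb2 : b ≤ 2) (hE0 : 0 ≤ E)
    (hER : E < 2 / (b + 1 + Real.sqrt ((b - 1)^2 + 8*a))) :
    E < 1 ∧ b*E < 1 ∧ a * E^2 < (1 - E)*(1 - b*E) := by
  set s := Real.sqrt ((b - 1)^2 + 8*a) with hs_def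
  have hs0 : 0 ≤ s := Real.sqrt_nonneg _
  have hs2 : s^2 = (b - 1)^2 + 8*a := Real.sq_sqrt (by nlinarith)
  have hs_gt : 2 < s := by nlinarith [sq_nonneg (s - 2)]
  have hD : 0 < b + 1 + s := by linarith
  have ht : E * (b + 1 + s) < 2 := by
    rw [lt_div_iff₀ hD] at hER; exact hER
  have hE1 : E < 1 := by nlinarith
  have hsb : b - 1 < s := by nlinarith [sq_nonneg (s - (b-1))]
  have hbE : b * E < 1 := by nlinarith
  refine ⟨hE1, hbE, ?_⟩
  have hc : 0 ≤ 2*a - b := by linarith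
  have hD2 : (b+1+s)^2 = 4*(2*a-b) + 2*(1+b)*(b+1+s) := by nlinarith
  have hpos : 0 < (1+b)*(b+1+s) + (2*a-b)*(2+E*(b+1+s)) := by
    have h1 : 0 < (1+b)*(b+1+s) := mul_pos (by linarith) hD
    have h2 : 0 ≤ (2*a-b)*(2+E*(b+1+s)) := mul_nonneg hc (by nlinarith [mul_nonneg hE0 hD.le])
    linarith
  have htt : 0 < 2 - E*(b+1+s) := by linarith
  have hkey : 0 < 1 - (1+b)*E - (2*a-b)*E^2 := by
    nlinarith [mul_pos htt hpos, sq_nonneg (b+1+s), mul_pos hD hD]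
  nlinarith [mul_nonneg (le_trans (by norm_num) ha1) hE0]

lemma alg_cancel (u T A d : ℝ) (hA : A ≠ 0) (hd : d ≠ 0) :
    (u * d) * (T / (A * d)) = u * T / A := by
  field_simp

theorem sigma_estimate (n : ℕ) (hn : 2 ≤ n) (ξ x y : Fin n → ℂ)
    (hξ : Function.Injective ξ) (p q : ℝ≥0∞) (hp : 1 ≤ p) (hpq : 1/p + 1/q = 1)
    (a b E : ℝ)
    (ha : a = ((n:ℝ) - 1) ^ (1/q).toReal) (hb : b = (2:ℝ) ^ (1/q).toReal)
    (hE : E = pnorm p (fun k => ‖x k - ξ k‖ / dmin ξ k))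
    (hER : E < 2 / (b + 1 + Real.sqrt ((b - 1)^2 + 8*a)))
    (hy : ∀ j, ‖y j - ξ j‖ ≤ ‖x j - ξ j‖)
    (i : Fin n) (hxξ : ∀ j, j ≠ i → x i ≠ ξ j) (hxy : ∀ j, j ≠ i → x i ≠ y j) :
    ‖(x i - ξ i) * ∑ j ∈ Finset.univ.erase i,
        (y j - ξ j) / ((x i - ξ j) * (x i - y j))‖
      ≤ a * E^2 / ((1 - E) * (1 - b*E)) ∧
    a * E^2 / ((1 - E) * (1 - b*E)) < 1 := by
  haveI : Fact (1 ≤ p) := ⟨hp⟩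
  set w : Fin n → ℝ := fun k => ‖x k - ξ k‖ / dmin ξ k with hw_def
  have hd : ∀ k, 0 < dmin ξ k := dmin_pos hn ξ hξ
  have hw0 : ∀ k, 0 ≤ w k := fun k => div_nonneg (norm_nonneg _) (hd k).le
  have hwd : ∀ k, ‖x k - ξ k‖ = w k * dmin ξ k := fun k =>
    (div_mul_cancel₀ _ (hd k).ne').symm
  have hE0 : 0 ≤ E := by
    rw [hE]; exact norm_nonneg ((WithLp.equiv p (Fin n → ℝ)).symm w)
  -- coordinate bound
  have hcoord : ∀ k, w k ≤ E := by
    intro k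
    have h := holder_sum p q hp hpq w hw0 {k}
    simpa [hE] using h
  -- exponent facts
  have he0 : 0 ≤ (1/q).toReal := ENNReal.toReal_nonneg
  have he1 : (1/q).toReal ≤ 1 := by
    have h1q : 1/q ≤ 1 := by
      calc 1/q ≤ 1/p + 1/q := le_add_of_nonneg_left zero_le
        _ = 1 := hpq
    calc (1/q).toReal ≤ (1 : ℝ≥0∞).toReal := ENNReal.toReal_mono ENNReal.one_ne_top h1q
      _ = 1 := by simp
  have ha1 : 1 ≤ a := by
    rw [ha]
    calc (1:ℝ) = 1 ^ (1/q).toReal := (Real.one_rpow _).symm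
      _ ≤ ((n:ℝ) - 1) ^ (1/q).toReal := by
          apply Real.rpow_le_rpow (by norm_num) ?_ he0
          have : (2:ℝ) ≤ (n:ℝ) := by exact_mod_cast hn
          linarith
  have hb1 : 1 ≤ b := by
    rw [hb]
    calc (1:ℝ) = 1 ^ (1/q).toReal := (Real.one_rpow _).symm
      _ ≤ (2:ℝ) ^ (1/q).toReal := Real.rpow_le_rpow (by norm_num) (by norm_num) he0
  have hb2 : b ≤ 2 := by
    rw [hb]
    calc (2:ℝ) ^ (1/q).toReal ≤ (2:ℝ) ^ (1:ℝ) :=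
          Real.rpow_le_rpow_of_exponent_le (by norm_num) he1
      _ = 2 := Real.rpow_one 2
  obtain ⟨hE1, hbE1, hquad⟩ := numeric_bounds a b E ha1 hb1 hb2 hE0 hER
  -- Hölder sums
  have hsum : ∑ j ∈ Finset.univ.erase i, w j ≤ a * E := by
    have h := holder_sum p q hp hpq w hw0 (Finset.univ.erase i)
    have hcard : ((Finset.univ.erase i).card : ℝ) = (n:ℝ) - 1 := by
      rw [Finset.card_erase_of_mem (Finset.mem_univ i), Finset.card_univ, Fintype.card_fin]
      have : 1 ≤ n := by omega
      push_cast [Nat.cast_sub this]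
      ring
    rw [hcard, ← hE, ← ha] at h
    exact h
  have hpair : ∀ j, j ≠ i → w i + w j ≤ b * E := by
    intro j hj
    have h := holder_sum p q hp hpq w hw0 {i, j}
    have hij : i ≠ j := fun h' => hj h'.symm
    rw [Finset.sum_pair hij] at h
    have hcard : (({i, j} : Finset (Fin n)).card : ℝ) = 2 := by
      rw [Finset.card_insert_of_notMem (by simpa using hij), Finset.card_singleton]
      norm_num
    rw [hcard, ← hE, ← hb] at h
    exact h
  -- key lower bounds
  have key1 : ∀ j, j ≠ i → (1 - E) * dmin ξ i ≤ ‖x i - ξ j‖ := by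
    intro j hj
    have htri : ‖ξ i - ξ j‖ ≤ ‖ξ i - x i‖ + ‖x i - ξ j‖ :=
      norm_sub_le_norm_sub_add_norm_sub _ _ _
    have h1 : dmin ξ i ≤ ‖ξ i - ξ j‖ := dmin_le ξ hj
    have h2 : ‖ξ i - x i‖ = w i * dmin ξ i := by
      rw [norm_sub_rev]; exact hwd i
    have h3 : w i * dmin ξ i ≤ E * dmin ξ i :=
      mul_le_mul_of_nonneg_right (hcoord i) (hd i).le
    nlinarith
  have key2 : ∀ j, j ≠ i → (1 - b*E) * dmin ξ j ≤ ‖x i - y j‖ := by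
    intro j hj
    have hij : i ≠ j := fun h' => hj h'.symm
    have t1 : ‖ξ i - ξ j‖ ≤ ‖ξ i - y j‖ + ‖y j - ξ j‖ :=
      norm_sub_le_norm_sub_add_norm_sub _ _ _
    have t2 : ‖ξ i - y j‖ ≤ ‖ξ i - x i‖ + ‖x i - y j‖ :=
      norm_sub_le_norm_sub_add_norm_sub _ _ _
    have hMi : dmin ξ i ≤ ‖ξ i - ξ j‖ := dmin_le ξ hj
    have hMj : dmin ξ j ≤ ‖ξ i - ξ j‖ := by
      have := dmin_le ξ hij
      rwa [norm_sub_rev] at this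
    have h2 : ‖ξ i - x i‖ = w i * dmin ξ i := by
      rw [norm_sub_rev]; exact hwd i
    have h3 : ‖y j - ξ j‖ ≤ w j * dmin ξ j := by
      rw [← hwd j]; exact hy j
    have hp2 : w i + w j ≤ b * E := hpair j hj
    have m1 : w i * dmin ξ i ≤ w i * ‖ξ i - ξ j‖ :=
      mul_le_mul_of_nonneg_left hMi (hw0 i)
    have m2 : w j * dmin ξ j ≤ w j * ‖ξ i - ξ j‖ :=
      mul_le_mul_of_nonneg_left hMj (hw0 j)
    have m3 : (1 - w i - w j) * dmin ξ j ≤ (1 - w i - w j) * ‖ξ i - ξ j‖ :=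
      mul_le_mul_of_nonneg_left hMj (by linarith)
    have m4 : (1 - b*E) * dmin ξ j ≤ (1 - w i - w j) * dmin ξ j :=
      mul_le_mul_of_nonneg_right (by linarith) (hd j).le
    nlinarith
  -- term-wise bound
  have h1E : (0:ℝ) < 1 - E := by linarith
  have h1bE : (0:ℝ) < 1 - b*E := by linarith
  have hden : (0:ℝ) < (1 - E) * (1 - b*E) := mul_pos h1E h1bE
  have hden3 : (0:ℝ) < (1 - E) * (1 - b*E) * dmin ξ i := mul_pos hden (hd i)
  have hterm : ∀ j ∈ Finset.univ.erase i,
      ‖(y j - ξ j) / ((x i - ξ j) * (x i - y j))‖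
        ≤ w j / ((1 - E) * (1 - b*E) * dmin ξ i) := by
    intro j hjmem
    have hj : j ≠ i := (Finset.mem_erase.mp hjmem).1
    rw [norm_div, norm_mul]
    have step1 : ‖y j - ξ j‖ / (‖x i - ξ j‖ * ‖x i - y j‖)
        ≤ (w j * dmin ξ j) / (((1 - E) * dmin ξ i) * ((1 - b*E) * dmin ξ j)) := by
      apply div_le_div₀ (mul_nonneg (hw0 j) (hd j).le)
      · rw [← hwd j]; exact hy j
      · exact mul_pos (mul_pos h1E (hd i)) (mul_pos h1bE (hd j))
      · exact mul_le_mul (key1 j hj) (key2 j hj) (mul_pos h1bE (hd j)).le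
          (norm_nonneg _)
    have step2 : (w j * dmin ξ j) / (((1 - E) * dmin ξ i) * ((1 - b*E) * dmin ξ j))
        = w j / ((1 - E) * (1 - b*E) * dmin ξ i) := by
      have h1 : dmin ξ j ≠ 0 := (hd j).ne'
      have h2 : dmin ξ i ≠ 0 := (hd i).ne'
      have h3 : (1 - E) ≠ 0 := by linarith
      have h4 : (1 - b*E) ≠ 0 := by linarith
      field_simp
    rw [step2] at step1
    exact step1
  -- assemble
  set T := ∑ j ∈ Finset.univ.erase i, w j with hT_def
  have hT0 : 0 ≤ T := Finset.sum_nonneg fun j _ => hw0 j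
  have main : ‖(x i - ξ i) * ∑ j ∈ Finset.univ.erase i,
      (y j - ξ j) / ((x i - ξ j) * (x i - y j))‖ ≤ a * E^2 / ((1 - E) * (1 - b*E)) := by
    rw [norm_mul]
    calc ‖x i - ξ i‖ * ‖∑ j ∈ Finset.univ.erase i,
            (y j - ξ j) / ((x i - ξ j) * (x i - y j))‖
        ≤ (w i * dmin ξ i) * ∑ j ∈ Finset.univ.erase i,
            ‖(y j - ξ j) / ((x i - ξ j) * (x i - y j))‖ := by
          rw [hwd i]
          exact mul_le_mul_of_nonneg_left
            (norm_sum_le _ _) (mul_nonneg (hw0 i) (hd i).le)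
      _ ≤ (w i * dmin ξ i) * ∑ j ∈ Finset.univ.erase i,
            (w j / ((1 - E) * (1 - b*E) * dmin ξ i)) := by
          apply mul_le_mul_of_nonneg_left (Finset.sum_le_sum hterm)
            (mul_nonneg (hw0 i) (hd i).le)
      _ = (w i * T) / ((1 - E) * (1 - b*E)) := by
          rw [← Finset.sum_div, ← hT_def]
          exact alg_cancel (w i) T ((1 - E) * (1 - b*E)) (dmin ξ i) hden.ne' (hd i).ne'
      _ ≤ (E * (a * E)) / ((1 - E) * (1 - b*E)) := by
          have hnum : w i * T ≤ E * (a * E) :=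
            mul_le_mul (hcoord i) hsum hT0 hE0
          exact div_le_div₀ (by nlinarith) hnum hden le_rfl
      _ = a * E^2 / ((1 - E) * (1 - b*E)) := by ring
  refine ⟨main, ?_⟩
  rw [div_lt_one hden]
  exact hquad
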